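/- Let ν be a σ-finite measure and g, h : Ω → (0,∞) measurable. For a measurable function k, the infimum over all measurable decompositions k = f₁ + f₂ of ( ∫ |f₁|² g dν + ∫ |f₂|² h dν )^{1/2} equals ( ∫ |k|²/(g⁻¹ + h⁻¹) dν )^{1/2}. -/

import Mathlib

open MeasureTheory

lemma key_ineq (a b G H : ℝ) (hG : 0 < G) (hH : 0 < H) :
    (a + b) ^ 2 / (G⁻¹ + H⁻¹) ≤ a ^ 2 * G + b ^ 2 * H := by
  have h1 : G⁻¹ + H⁻¹ = (G + H) / (G * H) := by field_simp; ring
  rw [h1, div_div_eq_mul_div, div_le_iff₀ (by positivity)]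
  nlinarith [sq_nonneg (a * G - b * H)]

lemma key_eq (K G H : ℝ) (hG : 0 < G) (hH : 0 < H) :
    K * (H / (G + H)) ^ 2 * G + K * (G / (G + H)) ^ 2 * H = K / (G⁻¹ + H⁻¹) := by
  have h1 : G + H ≠ 0 := by positivity
  field_simp
  ring

theorem sum_space_norm {Ω : Type*} [MeasurableSpace Ω] (ν : Measure Ω) [SigmaFinite ν]
    (g h : Ω → ℝ) (hg : Measurable g) (hh : Measurable h)
    (hgpos : ∀ x, 0 < g x) (hhpos : ∀ x, 0 < h x)
    (k : Ω → ℂ) (hk : Measurable k) :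
    sInf {v : ℝ | ∃ f₁ f₂ : Ω → ℂ, Measurable f₁ ∧ Measurable f₂ ∧
        Integrable (fun x => ‖f₁ x‖ ^ 2 * g x) ν ∧
        Integrable (fun x => ‖f₂ x‖ ^ 2 * h x) ν ∧
        k = f₁ + f₂ ∧
        v = Real.sqrt ((∫ x, ‖f₁ x‖ ^ 2 * g x ∂ν) +
              ∫ x, ‖f₂ x‖ ^ 2 * h x ∂ν)} =
      Real.sqrt (∫ x, ‖k x‖ ^ 2 / ((g x)⁻¹ + (h x)⁻¹) ∂ν) := by
  classical
  set F : Ω → ℝ := fun x => ‖k x‖ ^ 2 / ((g x)⁻¹ + (h x)⁻¹) with hFdef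
  have habsk : Measurable fun x => ‖k x‖ := by
    simpa using hk.norm
  have hFmeas : Measurable F := (habsk.pow_const 2).div (hg.inv.add hh.inv)
  have hFnonneg : ∀ x, 0 ≤ F x := fun x =>
    div_nonneg (sq_nonneg _)
      (add_nonneg (inv_nonneg.2 (hgpos x).le) (inv_nonneg.2 (hhpos x).le))
  have hlow : ∀ (f₁ f₂ : Ω → ℂ), k = f₁ + f₂ → ∀ x,
      F x ≤ ‖f₁ x‖ ^ 2 * g x + ‖f₂ x‖ ^ 2 * h x := by
    intro f₁ f₂ hkeq x
    have hd : 0 < (g x)⁻¹ + (h x)⁻¹ := by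
      have := hgpos x; have := hhpos x; positivity
    have hk' : ‖k x‖ ≤ ‖f₁ x‖ + ‖f₂ x‖ := by
      rw [hkeq]; exact norm_add_le _ _
    calc F x ≤ (‖f₁ x‖ + ‖f₂ x‖) ^ 2 / ((g x)⁻¹ + (h x)⁻¹) := by
          show ‖k x‖ ^ 2 / _ ≤ _
          gcongr
      _ ≤ _ := key_ineq _ _ _ _ (hgpos x) (hhpos x)
  by_cases hFi : Integrable F ν
  · -- the optimal decomposition
    have hsum : ∀ x, 0 < g x + h x := fun x => add_pos (hgpos x) (hhpos x)
    set r₁ : Ω → ℝ := fun x => h x / (g x + h x) with hr₁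
    set r₂ : Ω → ℝ := fun x => g x / (g x + h x) with hr₂
    set f₁ : Ω → ℂ := fun x => k x * (r₁ x : ℂ) with hf₁
    set f₂ : Ω → ℂ := fun x => k x * (r₂ x : ℂ) with hf₂
    have hm1 : Measurable f₁ :=
      hk.mul (Complex.measurable_ofReal.comp (hh.div (hg.add hh)))
    have hm2 : Measurable f₂ :=
      hk.mul (Complex.measurable_ofReal.comp (hg.div (hg.add hh)))
    have hkdec : k = f₁ + f₂ := by
      funext x
      have h1 : (r₁ x : ℂ) + (r₂ x : ℂ) = 1 := by
        rw [← Complex.ofReal_add, hr₁, hr₂]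
        norm_cast
        show h x / (g x + h x) + g x / (g x + h x) = 1
        rw [← add_div, add_comm (h x)]
        exact div_self (hsum x).ne'
      simp only [Pi.add_apply, hf₁, hf₂, ← mul_add, h1, mul_one]
    have habs1 : ∀ x, ‖f₁ x‖ = ‖k x‖ * r₁ x := fun x => by
      rw [hf₁, norm_mul, Complex.norm_real, Real.norm_eq_abs,
        abs_of_nonneg (div_nonneg (hhpos x).le (hsum x).le)]
    have habs2 : ∀ x, ‖f₂ x‖ = ‖k x‖ * r₂ x := fun x => by
      rw [hf₂, norm_mul, Complex.norm_real, Real.norm_eq_abs,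
        abs_of_nonneg (div_nonneg (hgpos x).le (hsum x).le)]
    have hpt : ∀ x, ‖f₁ x‖ ^ 2 * g x + ‖f₂ x‖ ^ 2 * h x = F x := by
      intro x
      rw [habs1, habs2, mul_pow, mul_pow]
      exact key_eq _ _ _ (hgpos x) (hhpos x)
    have ht1meas : Measurable (fun x => ‖f₁ x‖ ^ 2 * g x) := by
      have : Measurable fun x => ‖f₁ x‖ := by
        simpa using hm1.norm
      exact (this.pow_const 2).mul hg
    have ht2meas : Measurable (fun x => ‖f₂ x‖ ^ 2 * h x) := by
      have : Measurable fun x => ‖f₂ x‖ := by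
        simpa using hm2.norm
      exact (this.pow_const 2).mul hh
    have hint1 : Integrable (fun x => ‖f₁ x‖ ^ 2 * g x) ν := by
      refine hFi.mono' ht1meas.aestronglyMeasurable (Filter.Eventually.of_forall fun x => ?_)
      rw [Real.norm_eq_abs, abs_of_nonneg (mul_nonneg (sq_nonneg _) (hgpos x).le)]
      nlinarith [hpt x, mul_nonneg (sq_nonneg (‖f₂ x‖)) (hhpos x).le]
    have hint2 : Integrable (fun x => ‖f₂ x‖ ^ 2 * h x) ν := by
      refine hFi.mono' ht2meas.aestronglyMeasurable (Filter.Eventually.of_forall fun x => ?_)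
      rw [Real.norm_eq_abs, abs_of_nonneg (mul_nonneg (sq_nonneg _) (hhpos x).le)]
      nlinarith [hpt x, mul_nonneg (sq_nonneg (‖f₁ x‖)) (hgpos x).le]
    have hI : (∫ x, ‖f₁ x‖ ^ 2 * g x ∂ν) +
        (∫ x, ‖f₂ x‖ ^ 2 * h x ∂ν) = ∫ x, F x ∂ν := by
      rw [← integral_add hint1 hint2]
      exact integral_congr_ae (Filter.Eventually.of_forall hpt)
    have hmem : Real.sqrt (∫ x, F x ∂ν) ∈ {v : ℝ | ∃ f₁ f₂ : Ω → ℂ, Measurable f₁ ∧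
        Measurable f₂ ∧
        Integrable (fun x => ‖f₁ x‖ ^ 2 * g x) ν ∧
        Integrable (fun x => ‖f₂ x‖ ^ 2 * h x) ν ∧
        k = f₁ + f₂ ∧
        v = Real.sqrt ((∫ x, ‖f₁ x‖ ^ 2 * g x ∂ν) +
              ∫ x, ‖f₂ x‖ ^ 2 * h x ∂ν)} :=
      ⟨f₁, f₂, hm1, hm2, hint1, hint2, hkdec, by rw [hI]⟩
    apply le_antisymm
    · refine csInf_le ⟨0, ?_⟩ hmem
      rintro v ⟨_, _, _, _, _, _, _, rfl⟩
      exact Real.sqrt_nonneg _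
    · refine le_csInf ⟨_, hmem⟩ ?_
      rintro v ⟨f₁', f₂', hm1', hm2', hi1', hi2', hdec', rfl⟩
      apply Real.sqrt_le_sqrt
      rw [← integral_add hi1' hi2']
      exact integral_mono hFi (hi1'.add hi2') (hlow f₁' f₂' hdec')
  · have hS : {v : ℝ | ∃ f₁ f₂ : Ω → ℂ, Measurable f₁ ∧ Measurable f₂ ∧
        Integrable (fun x => ‖f₁ x‖ ^ 2 * g x) ν ∧
        Integrable (fun x => ‖f₂ x‖ ^ 2 * h x) ν ∧
        k = f₁ + f₂ ∧
        v = Real.sqrt ((∫ x, ‖f₁ x‖ ^ 2 * g x ∂ν) +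
              ∫ x, ‖f₂ x‖ ^ 2 * h x ∂ν)} = ∅ := by
      rw [Set.eq_empty_iff_forall_notMem]
      rintro v ⟨f₁, f₂, hm1, hm2, hi1, hi2, hdec, -⟩
      refine hFi ((hi1.add hi2).mono' hFmeas.aestronglyMeasurable
        (Filter.Eventually.of_forall fun x => ?_))
      rw [Real.norm_eq_abs, abs_of_nonneg (hFnonneg x)]
      exact hlow f₁ f₂ hdec x
    rw [hS, Real.sInf_empty, integral_undef hFi, Real.sqrt_zero]
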